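/- arXiv:1709.00563 — 2 statements merged into one kernel-verified Lean document; each statement's English description precedes it below -/
import Mathlib

section
/- Let K(w₁, w₂) = d(w₁)^{1/2} d(w₂)^{1/2} |w₁ − w₂|^{−3} for w₁ ∈ Ω₊ and w₂ ∈ Ω₋. Then for every fixed w₂ ∈ Ω₋, ∬_{Ω₊} K(w₁, w₂) dλ(w₁) ≤ 4π, and symmetrically for every fixed w₁ ∈ Ω₊, ∬_{Ω₋} K(w₁, w₂) dλ(w₂) ≤ 4π. -/
open Metric Set Filter Complex MeasureTheory



lemma schur_key (c : ℂ) (D : ℝ) (hD : 0 < D) :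
    ∫⁻ w in {w : ℂ | D ≤ dist w c},
      ENNReal.ofReal (Real.sqrt D * dist w c ^ (-(5/2) : ℝ)) ≤
      ENNReal.ofReal (4 * Real.pi) := by
  set S : Set ℂ := {w : ℂ | D ≤ dist w c} with hS
  have hg_meas : Measurable fun w : ℂ => Real.sqrt D * dist w c ^ (-(5/2) : ℝ) :=
    (measurable_const.mul ((measurable_dist.comp
      (measurable_id.prodMk measurable_const)).pow_const _))
  have hg_nn : ∀ w : ℂ, 0 ≤ Real.sqrt D * dist w c ^ (-(5/2) : ℝ) := fun w =>
    mul_nonneg (Real.sqrt_nonneg _) (Real.rpow_nonneg dist_nonneg _)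
  rw [lintegral_eq_lintegral_meas_lt _ (Eventually.of_forall hg_nn) hg_meas.aemeasurable]
  set B : ℝ := D ^ ((2:ℝ)/5) with hB
  set T : ℝ := D ^ (-(2:ℝ)) with hT
  have hT0 : 0 < T := Real.rpow_pos_of_pos hD _
  have hBT : B * T ^ (-(4/5) : ℝ) = D ^ 2 := by
    rw [hB, hT, ← Real.rpow_natCast D 2, ← Real.rpow_mul hD.le, ← Real.rpow_add hD]
    norm_num
  have hBT1 : B * T ^ ((1:ℝ)/5) = 1 := by
    rw [hB, hT, ← Real.rpow_mul hD.le, ← Real.rpow_add hD]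
    norm_num
  have hD2T : D ^ 2 * T = 1 := by
    rw [hT, ← Real.rpow_natCast D 2, ← Real.rpow_add hD]
    norm_num
  set h : ℝ → ℝ := fun t => Real.pi * (B * t ^ (-(4/5) : ℝ)) - Real.pi * D ^ 2 with hh
  -- pointwise bound on measures
  have hmeas_bound : ∀ t ∈ Ioi (0:ℝ),
      (volume.restrict S) {w : ℂ | t < Real.sqrt D * dist w c ^ (-(5/2) : ℝ)} ≤
        ENNReal.ofReal (h t) := by
    intro t ht
    have ht0 : (0:ℝ) < t := ht
    have hSmeas : MeasurableSet S :=
      (isClosed_le continuous_const (continuous_id.dist continuous_const)).measurableSet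
    rw [Measure.restrict_apply' hSmeas]
    set R : ℝ := (Real.sqrt D / t) ^ ((2:ℝ)/5) with hR
    have hRnn : 0 ≤ R := Real.rpow_nonneg (div_nonneg (Real.sqrt_nonneg _) ht0.le) _
    have hsub : {w : ℂ | t < Real.sqrt D * dist w c ^ (-(5/2) : ℝ)} ∩ S ⊆
        ball c R \ ball c D := by
      rintro w ⟨hw1, hw2⟩
      have hr : D ≤ dist w c := hw2
      have hrpos : 0 < dist w c := lt_of_lt_of_le hD hr
      have hw1' : t < Real.sqrt D * dist w c ^ (-(5/2) : ℝ) := hw1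
      have h1 : t * dist w c ^ ((5/2) : ℝ) < Real.sqrt D := by
        have h2 : dist w c ^ (-(5/2) : ℝ) = (dist w c ^ ((5/2) : ℝ))⁻¹ := by
          rw [← Real.rpow_neg hrpos.le]
        rw [h2] at hw1'
        have hp : 0 < dist w c ^ ((5/2) : ℝ) := Real.rpow_pos_of_pos hrpos _
        calc t * dist w c ^ ((5/2) : ℝ)
            < Real.sqrt D * (dist w c ^ ((5/2) : ℝ))⁻¹ * dist w c ^ ((5/2) : ℝ) :=
              mul_lt_mul_of_pos_right hw1' hp
          _ = Real.sqrt D := by field_simp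
      have h3 : dist w c ^ ((5/2) : ℝ) < Real.sqrt D / t := by
        rw [lt_div_iff₀ ht0, mul_comm]; exact h1
      have h4 : dist w c < R := by
        have := Real.rpow_lt_rpow (Real.rpow_nonneg hrpos.le _) h3
          (by norm_num : (0:ℝ) < 2/5)
        rwa [← Real.rpow_mul hrpos.le, show ((5:ℝ)/2) * (2/5) = 1 by norm_num,
          Real.rpow_one] at this
      exact ⟨mem_ball.2 h4, fun hb => absurd (mem_ball.1 hb) (not_lt.2 hr)⟩
    rcases le_or_gt R D with hRD | hRD
    · have : {w : ℂ | t < Real.sqrt D * dist w c ^ (-(5/2) : ℝ)} ∩ S = ∅ := by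
        rw [eq_empty_iff_forall_notMem]
        intro w hw
        obtain ⟨h1, h2⟩ := hsub hw
        exact h2 (mem_ball.2 (lt_of_lt_of_le (mem_ball.1 h1) hRD))
      rw [this, measure_empty]
      exact zero_le
    · calc volume ({w : ℂ | t < Real.sqrt D * dist w c ^ (-(5/2) : ℝ)} ∩ S)
          ≤ volume (ball c R \ ball c D) := measure_mono hsub
        _ ≤ ENNReal.ofReal (h t) := by
            rw [measure_diff (ball_subset_ball hRD.le)
                measurableSet_ball.nullMeasurableSet measure_ball_lt_top.ne,
              Complex.volume_ball, Complex.volume_ball]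
            have hpi : (NNReal.pi : ENNReal) = ENNReal.ofReal Real.pi := by
              rw [← ENNReal.ofReal_coe_nnreal, NNReal.coe_real_pi]
            rw [hpi, ← ENNReal.ofReal_pow hRnn, ← ENNReal.ofReal_pow hD.le,
              ← ENNReal.ofReal_mul (by positivity), ← ENNReal.ofReal_mul (by positivity),
              ← ENNReal.ofReal_sub _ (by positivity)]
            apply ENNReal.ofReal_le_ofReal
            have hR2 : R ^ 2 ≤ B * t ^ (-(4/5) : ℝ) := by
              have e1 : R ^ 2 = (Real.sqrt D / t) ^ ((4:ℝ)/5) := by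
                rw [hR, ← Real.rpow_natCast _ 2, ← Real.rpow_mul
                  (div_nonneg (Real.sqrt_nonneg _) ht0.le)]
                norm_num
              have e2 : Real.sqrt D ^ ((4:ℝ)/5) = B := by
                rw [Real.sqrt_eq_rpow, ← Real.rpow_mul hD.le, hB]; norm_num
              rw [e1, Real.div_rpow (Real.sqrt_nonneg _) ht0.le,
                div_eq_mul_inv, ← Real.rpow_neg ht0.le, e2]
            simp only [hh]
            nlinarith [Real.pi_pos]
  -- now bound the outer integral
  calc ∫⁻ t in Ioi (0:ℝ), (volume.restrict S) {w : ℂ | t < Real.sqrt D * dist w c ^ (-(5/2) : ℝ)}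
      ≤ ∫⁻ t in Ioi (0:ℝ), ENNReal.ofReal (h t) :=
        setLIntegral_mono' measurableSet_Ioi hmeas_bound
    _ ≤ ENNReal.ofReal (4 * Real.pi) := by
        rw [← Ioc_union_Ioi_eq_Ioi hT0.le,
          lintegral_union measurableSet_Ioi (Ioc_disjoint_Ioi le_rfl)]
        have hzero : ∫⁻ t in Ioi T, ENNReal.ofReal (h t) = 0 := by
          rw [← lintegral_zero (μ := volume.restrict (Ioi T))]
          apply setLIntegral_congr_fun measurableSet_Ioi
          intro t ht
          have ht' : T < t := ht
          have : t ^ (-(4/5) : ℝ) ≤ T ^ (-(4/5) : ℝ) :=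
            Real.rpow_le_rpow_of_nonpos hT0 ht'.le (by norm_num)
          have hle : h t ≤ 0 := by
            have := mul_le_mul_of_nonneg_left (mul_le_mul_of_nonneg_left this
              (by positivity : (0:ℝ) ≤ B)) Real.pi_pos.le
            rw [hh]; simp only; nlinarith [Real.pi_pos]
          exact ENNReal.ofReal_eq_zero.2 hle
        rw [hzero, add_zero]
        have hnn : 0 ≤ᵐ[volume.restrict (Ioc 0 T)] h := by
          rw [EventuallyLE, ae_restrict_iff' measurableSet_Ioc]
          apply ae_of_all
          intro t ht
          have : T ^ (-(4/5) : ℝ) ≤ t ^ (-(4/5) : ℝ) :=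
            Real.rpow_le_rpow_of_nonpos ht.1 ht.2 (by norm_num)
          have := mul_le_mul_of_nonneg_left (mul_le_mul_of_nonneg_left this
            (by positivity : (0:ℝ) ≤ B)) Real.pi_pos.le
          simp only [Pi.zero_apply, hh]; nlinarith [Real.pi_pos]
        have hint : IntegrableOn h (Ioc 0 T) := by
          apply Integrable.sub
          · exact (((intervalIntegral.intervalIntegrable_rpow'
              (by norm_num : (-1:ℝ) < -(4/5))).1).const_mul B).const_mul Real.pi
          · exact (integrableOn_const_iff).2 (Or.inr (by
              rw [Real.volume_Ioc]; exact ENNReal.ofReal_lt_top))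
        rw [← ofReal_integral_eq_lintegral_ofReal hint hnn]
        apply ENNReal.ofReal_le_ofReal
        have hrint : ∫ t in Ioc 0 T, t ^ (-(4/5) : ℝ) = 5 * T ^ ((1:ℝ)/5) := by
          rw [← intervalIntegral.integral_of_le hT0.le,
            integral_rpow (Or.inl (by norm_num : (-1:ℝ) < -(4/5)))]
          rw [Real.zero_rpow (by norm_num : (-(4/5) : ℝ) + 1 ≠ 0)]
          norm_num
          ring
        have : ∫ t in Ioc 0 T, h t
            = Real.pi * B * (5 * T ^ ((1:ℝ)/5)) - Real.pi * D ^ 2 * T := by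
          rw [hh]
          rw [integral_sub (by
              exact (((intervalIntegral.intervalIntegrable_rpow'
                (by norm_num : (-1:ℝ) < -(4/5))).1).const_mul B).const_mul Real.pi)
            ((integrableOn_const_iff (C := Real.pi * D ^ 2) (s := Ioc 0 T) (μ := volume)).2 (Or.inr (by
              rw [Real.volume_Ioc]; exact ENNReal.ofReal_lt_top)))]
          rw [MeasureTheory.integral_const, measureReal_restrict_apply_univ, measureReal_def, Real.volume_Ioc,
            sub_zero, ENNReal.toReal_ofReal hT0.le, smul_eq_mul]
          rw [MeasureTheory.integral_const_mul, MeasureTheory.integral_const_mul, hrint]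
          ring
        rw [this]
        have e3 : Real.pi * B * (5 * T ^ ((1:ℝ)/5)) = 5 * Real.pi := by
          rw [show Real.pi * B * (5 * T ^ ((1:ℝ)/5))
            = 5 * Real.pi * (B * T ^ ((1:ℝ)/5)) by ring, hBT1, mul_one]
        have e4 : Real.pi * D ^ 2 * T = Real.pi := by
          rw [mul_assoc, hD2T, mul_one]
        rw [e3, e4]; ring_nf; linarith [Real.pi_pos]


lemma schur_cross (a : ℝ → ℝ) (hcont : Continuous a) (w₁ w₂ : ℂ)
    (h₁ : a w₁.re < w₁.im) (h₂ : w₂.im < a w₂.re) :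
    ∃ p : ℂ, p.im = a p.re ∧ dist w₁ p ≤ dist w₁ w₂ ∧ dist w₂ p ≤ dist w₁ w₂ := by
  set f : ℝ → ℂ := fun t => w₁ + (t : ℂ) * (w₂ - w₁) with hf
  have hfc : Continuous f := by continuity
  set g : ℝ → ℝ := fun t => (f t).im - a ((f t).re) with hg
  have hgc : Continuous g := (Complex.continuous_im.comp hfc).sub
    (hcont.comp (Complex.continuous_re.comp hfc))
  have hg0 : 0 < g 0 := by
    simp [hg, hf, sub_pos, h₁]
  have hg1 : g 1 < 0 := by
    simp [hg, hf, sub_neg, h₂]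
  have : (0:ℝ) ∈ Icc (g 1) (g 0) := ⟨hg1.le, hg0.le⟩
  obtain ⟨t, ht, hgt⟩ := intermediate_value_Icc' (by norm_num : (0:ℝ) ≤ 1)
    (hgc.continuousOn) this
  refine ⟨f t, by simpa [hg, sub_eq_zero] using hgt, ?_, ?_⟩
  · have : dist w₁ (f t) = |t| * dist w₁ w₂ := by
      rw [Complex.dist_eq, Complex.dist_eq, hf]
      simp only
      rw [show w₁ - (w₁ + (t:ℂ) * (w₂ - w₁)) = (t:ℂ) * (w₁ - w₂) by ring]
      rw [norm_mul, Complex.norm_real, Real.norm_eq_abs]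
    rw [this, _root_.abs_of_nonneg ht.1]
    nlinarith [dist_nonneg (x := w₁) (y := w₂), ht.2]
  · have : dist w₂ (f t) = |1 - t| * dist w₁ w₂ := by
      rw [Complex.dist_eq, Complex.dist_eq, hf]
      simp only
      rw [show w₂ - (w₁ + (t:ℂ) * (w₂ - w₁)) = ((1:ℝ) - t : ℂ) * (w₂ - w₁) by push_cast; ring]
      rw [norm_mul]
      rw [show ((1:ℝ) - t : ℂ) = ((1 - t : ℝ) : ℂ) by push_cast; ring, Complex.norm_real, Real.norm_eq_abs,
        norm_sub_rev]
    rw [this, _root_.abs_of_nonneg (by linarith [ht.2])]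
    nlinarith [dist_nonneg (x := w₁) (y := w₂), ht.1]


lemma schur_half (G : Set ℂ) (S : Set ℂ) (hS : MeasurableSet S) (c : ℂ)
    (hb : ∀ w ∈ S, Metric.infDist w G ≤ dist w c ∧ Metric.infDist c G ≤ dist w c) :
    ∫⁻ w in S, ENNReal.ofReal
        (Real.sqrt (Metric.infDist w G) * Real.sqrt (Metric.infDist c G) / dist w c ^ 3)
      ≤ ENNReal.ofReal (4 * Real.pi) := by
  set D := Metric.infDist c G with hD
  rcases eq_or_lt_of_le (Metric.infDist_nonneg : (0:ℝ) ≤ D) with h0 | hpos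
  · rw [hD, ← h0]
    simp only [Real.sqrt_zero, mul_zero, zero_div, ENNReal.ofReal_zero, lintegral_zero]
    exact zero_le
  · calc ∫⁻ w in S, ENNReal.ofReal
          (Real.sqrt (Metric.infDist w G) * Real.sqrt D / dist w c ^ 3)
        ≤ ∫⁻ w in S, ENNReal.ofReal (Real.sqrt D * dist w c ^ (-(5/2) : ℝ)) := by
          apply setLIntegral_mono' hS
          intro w hw
          apply ENNReal.ofReal_le_ofReal
          obtain ⟨hd₁, hd₂⟩ := hb w hw
          have hrpos : 0 < dist w c := lt_of_lt_of_le hpos hd₂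
          have key : Real.sqrt (dist w c) / dist w c ^ 3 = dist w c ^ (-(5/2) : ℝ) := by
            rw [Real.sqrt_eq_rpow, ← Real.rpow_natCast (dist w c) 3,
              ← Real.rpow_sub hrpos]
            norm_num
          calc Real.sqrt (Metric.infDist w G) * Real.sqrt D / dist w c ^ 3
              = Real.sqrt (Metric.infDist w G) / dist w c ^ 3 * Real.sqrt D := by ring
            _ ≤ Real.sqrt (dist w c) / dist w c ^ 3 * Real.sqrt D := by
                apply mul_le_mul_of_nonneg_right _ (Real.sqrt_nonneg _)
                exact div_le_div_of_nonneg_right (Real.sqrt_le_sqrt hd₁) (by positivity)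
            _ = Real.sqrt D * dist w c ^ (-(5/2) : ℝ) := by rw [key]; ring
      _ ≤ ∫⁻ w in {w : ℂ | D ≤ dist w c},
            ENNReal.ofReal (Real.sqrt D * dist w c ^ (-(5/2) : ℝ)) := by
          apply lintegral_mono' (Measure.restrict_mono (fun w hw => (hb w hw).2) le_rfl) le_rfl
      _ ≤ ENNReal.ofReal (4 * Real.pi) := schur_key c D hpos


/-- Schur-test bounds for the kernel `K(w₁,w₂) = d(w₁)^{1/2} d(w₂)^{1/2} |w₁-w₂|^{-3}`:
for every fixed `w₂ ∈ Ω₋`, `∬_{Ω₊} K(w₁,w₂) dλ(w₁) ≤ 4π`, and for every fixed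
`w₁ ∈ Ω₊`, `∬_{Ω₋} K(w₁,w₂) dλ(w₂) ≤ 4π`. Here `d(w) = dist(w,Γ)` and `Ω₊, Ω₋` are
the domains above and below the Lipschitz graph `Γ`. -/
theorem schur_kernel_bound
    (a : ℝ → ℝ) (M : ℝ) (hM : 0 ≤ M) (ha : LipschitzWith (Real.toNNReal M) a)
    (Γ : Set ℂ) (hΓ : Γ = {w : ℂ | w.im = a w.re})
    (Ωp : Set ℂ) (hΩp : Ωp = {w : ℂ | a w.re < w.im})
    (Ωm : Set ℂ) (hΩm : Ωm = {w : ℂ | w.im < a w.re})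
    (K : ℂ → ℂ → ℝ)
    (hK : ∀ w₁ w₂, K w₁ w₂ =
      Real.sqrt (infDist w₁ Γ) * Real.sqrt (infDist w₂ Γ) / ‖w₁ - w₂‖ ^ 3) :
    (∀ w₂ ∈ Ωm, ∫⁻ w₁ in Ωp, ENNReal.ofReal (K w₁ w₂) ≤
        ENNReal.ofReal (4 * Real.pi)) ∧
    (∀ w₁ ∈ Ωp, ∫⁻ w₂ in Ωm, ENNReal.ofReal (K w₁ w₂) ≤
        ENNReal.ofReal (4 * Real.pi)) := by
  have hcont : Continuous a := ha.continuous
  have hΩpm : MeasurableSet Ωp := by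
    rw [hΩp]
    exact (isOpen_lt (hcont.comp Complex.continuous_re) Complex.continuous_im).measurableSet
  have hΩmm : MeasurableSet Ωm := by
    rw [hΩm]
    exact (isOpen_lt Complex.continuous_im (hcont.comp Complex.continuous_re)).measurableSet
  constructor
  · intro w₂ hw₂
    have hw₂' : w₂.im < a w₂.re := by rw [hΩm] at hw₂; exact hw₂
    have heq : ∀ w₁, K w₁ w₂ =
        Real.sqrt (infDist w₁ Γ) * Real.sqrt (infDist w₂ Γ) / dist w₁ w₂ ^ 3 := by
      intro w₁; rw [hK, Complex.dist_eq]
    simp only [heq]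
    apply schur_half Γ Ωp hΩpm w₂
    intro w hw
    have hw' : a w.re < w.im := by rw [hΩp] at hw; exact hw
    obtain ⟨p, hp, h1, h2⟩ := schur_cross a hcont w w₂ hw' hw₂'
    have hpΓ : p ∈ Γ := by rw [hΓ]; exact hp
    exact ⟨le_trans (Metric.infDist_le_dist_of_mem hpΓ) h1,
      le_trans (Metric.infDist_le_dist_of_mem hpΓ) h2⟩
  · intro w₁ hw₁
    have hw₁' : a w₁.re < w₁.im := by rw [hΩp] at hw₁; exact hw₁
    have heq : ∀ w₂, K w₁ w₂ =
        Real.sqrt (infDist w₂ Γ) * Real.sqrt (infDist w₁ Γ) / dist w₂ w₁ ^ 3 := by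
      intro w₂
      rw [hK, Complex.dist_eq, norm_sub_rev, mul_comm]
    simp only [heq]
    apply schur_half Γ Ωm hΩmm w₁
    intro w hw
    have hw' : w.im < a w.re := by rw [hΩm] at hw; exact hw
    obtain ⟨p, hp, h1, h2⟩ := schur_cross a hcont w₁ w hw₁' hw'
    have hpΓ : p ∈ Γ := by rw [hΓ]; exact hp
    exact ⟨le_trans (Metric.infDist_le_dist_of_mem hpΓ) (by rwa [dist_comm w₁ w] at h2),
      le_trans (Metric.infDist_le_dist_of_mem hpΓ) (by rwa [dist_comm w₁ w] at h1)⟩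
end

section
/- The integral operator S from L²(Ω₊, dλ) to L²(Ω₋, dλ) with kernel K(w₁, w₂) = d(w₁)^{1/2} d(w₂)^{1/2} |w₁ − w₂|^{−3} is bounded with operator norm at most 4π. -/
open Metric Set Filter Complex MeasureTheory
open scoped ENNReal NNReal

lemma vol_ball_complex (a : ℂ) {r : ℝ} (hr : 0 ≤ r) :
    volume (ball a r) = ENNReal.ofReal (Real.pi * r ^ 2) := by
  rw [Complex.volume_ball, ← ENNReal.ofReal_pow hr, mul_comm,
    ← ENNReal.ofReal_coe_nnreal, NNReal.coe_real_pi, ← ENNReal.ofReal_mul Real.pi_pos.le]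

lemma radial_bound (w₀ : ℂ) {d : ℝ} (hd : 0 < d) :
    ∫⁻ w : ℂ, ENNReal.ofReal
      (if d ≤ dist w w₀ then Real.sqrt d * dist w w₀ ^ (-(5:ℝ)/2) else 0)
      ≤ ENNReal.ofReal (4 * Real.pi) := by
  have hgm : Measurable (fun w : ℂ => if d ≤ dist w w₀ then
      Real.sqrt d * dist w w₀ ^ (-(5:ℝ)/2) else 0) := by
    apply Measurable.ite (measurableSet_le measurable_const (by fun_prop)) ?_ measurable_const
    fun_prop
  have hgnn : ∀ w : ℂ, 0 ≤ (if d ≤ dist w w₀ then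
      Real.sqrt d * dist w w₀ ^ (-(5:ℝ)/2) else 0) := by
    intro w
    split
    · exact mul_nonneg (Real.sqrt_nonneg _) (Real.rpow_nonneg dist_nonneg _)
    · exact le_refl 0
  rw [lintegral_eq_lintegral_meas_lt volume (Filter.Eventually.of_forall hgnn) hgm.aemeasurable]
  -- the radius function
  set R : ℝ → ℝ := fun t => (Real.sqrt d / t) ^ ((2:ℝ)/5) with hR
  set T : ℝ := d ^ (-(2:ℝ)) with hT
  have hTpos : 0 < T := Real.rpow_pos_of_pos hd _
  have hset : ∀ t ∈ Ioi (0:ℝ), {w : ℂ | t < (if d ≤ dist w w₀ then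
      Real.sqrt d * dist w w₀ ^ (-(5:ℝ)/2) else 0)} = ball w₀ (R t) \ ball w₀ d := by
    intro t ht
    rw [mem_Ioi] at ht
    ext w
    simp only [mem_setOf_eq, mem_diff, mem_ball, not_lt]
    by_cases h : d ≤ dist w w₀
    · have hdist : 0 < dist w w₀ := lt_of_lt_of_le hd h
      rw [if_pos h]
      constructor
      · intro hlt
        refine ⟨?_, h⟩
        -- t < √d * dist^{-5/2} ⇒ dist < R t
        have h1 : t * dist w w₀ ^ ((5:ℝ)/2) < Real.sqrt d := by
          have := mul_lt_mul_of_pos_right hlt (Real.rpow_pos_of_pos hdist ((5:ℝ)/2))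
          calc t * dist w w₀ ^ ((5:ℝ)/2) < Real.sqrt d * dist w w₀ ^ (-(5:ℝ)/2) * dist w w₀ ^ ((5:ℝ)/2) := this
            _ = Real.sqrt d := by
                rw [mul_assoc, ← Real.rpow_add hdist]
                norm_num
        have h2 : dist w w₀ ^ ((5:ℝ)/2) < Real.sqrt d / t := by
          rw [lt_div_iff₀ ht]; linarith [mul_comm t (dist w w₀ ^ ((5:ℝ)/2))]
        have h3 : dist w w₀ < R t := by
          rw [hR]
          have : ((2:ℝ)/5) = ((5:ℝ)/2)⁻¹ := by norm_num
          rw [this]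
          exact (Real.lt_rpow_inv_iff_of_pos dist_nonneg
            (div_nonneg (Real.sqrt_nonneg d) ht.le) (by norm_num)).mpr h2
        exact h3
      · rintro ⟨h1, -⟩
        -- dist < R t ⇒ t < √d * dist^{-5/2}
        have h2 : dist w w₀ ^ ((5:ℝ)/2) < Real.sqrt d / t := by
          have : ((2:ℝ)/5) = ((5:ℝ)/2)⁻¹ := by norm_num
          rw [hR, this] at h1
          exact (Real.lt_rpow_inv_iff_of_pos dist_nonneg
            (div_nonneg (Real.sqrt_nonneg d) ht.le) (by norm_num)).mp h1
        have h3 : t * dist w w₀ ^ ((5:ℝ)/2) < Real.sqrt d := by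
          rw [mul_comm, ← lt_div_iff₀ ht]; exact h2
        calc t = t * dist w w₀ ^ ((5:ℝ)/2) * dist w w₀ ^ (-(5:ℝ)/2) := by
                rw [mul_assoc, ← Real.rpow_add hdist]; norm_num
          _ < Real.sqrt d * dist w w₀ ^ (-(5:ℝ)/2) := by
                exact mul_lt_mul_of_pos_right h3 (Real.rpow_pos_of_pos hdist _)
    · rw [if_neg h]
      push_neg at h
      constructor
      · intro h'; exact absurd h' (not_lt.mpr ht.le)
      · rintro ⟨-, h2⟩; exact absurd h2 (not_le.mpr h)
  -- key facts about R
  have hRpos : ∀ t : ℝ, 0 < t → 0 < R t := fun t ht =>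
    Real.rpow_pos_of_pos (div_pos (Real.sqrt_pos.mpr hd) ht) _
  have hRsq : ∀ t : ℝ, 0 < t → R t ^ 2 = d ^ ((2:ℝ)/5) * t ^ (-(4:ℝ)/5) := by
    intro t ht
    have ha : 0 < Real.sqrt d / t := div_pos (Real.sqrt_pos.mpr hd) ht
    have key : ((2:ℝ)/5) + ((2:ℝ)/5) = (4:ℝ)/5 := by norm_num
    rw [hR, sq, ← Real.rpow_add ha, key, Real.div_rpow (Real.sqrt_nonneg d) ht.le,
      Real.sqrt_eq_rpow, ← Real.rpow_mul hd.le, div_eq_mul_inv, ← Real.rpow_neg ht.le]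
    norm_num [neg_div]
  have hRle : ∀ t : ℝ, T ≤ t → R t ≤ d := by
    intro t htT
    have h1 : Real.sqrt d / t ≤ Real.sqrt d / T :=
      div_le_div_of_nonneg_left (Real.sqrt_nonneg d) hTpos htT
    have h2 : Real.sqrt d / T = d ^ ((5:ℝ)/2) := by
      rw [hT, Real.sqrt_eq_rpow, ← Real.rpow_sub hd]
      norm_num
    have h3 : R t ≤ (d ^ ((5:ℝ)/2)) ^ ((2:ℝ)/5) := by
      rw [hR]
      exact Real.rpow_le_rpow (div_nonneg (Real.sqrt_nonneg d)
        (lt_of_lt_of_le hTpos htT).le) (h2 ▸ h1) (by norm_num)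
    calc R t ≤ (d ^ ((5:ℝ)/2)) ^ ((2:ℝ)/5) := h3
      _ = d := by rw [← Real.rpow_mul hd.le]; norm_num
  have hmeas : ∀ t : ℝ, 0 < t → volume (ball w₀ (R t) \ ball w₀ d)
      = ENNReal.ofReal (Real.pi * R t ^ 2) - ENNReal.ofReal (Real.pi * d ^ 2) := by
    intro t ht
    by_cases hle : d ≤ R t
    · rw [measure_diff (ball_subset_ball hle) measurableSet_ball.nullMeasurableSet
        (by rw [vol_ball_complex w₀ hd.le]; exact ENNReal.ofReal_ne_top),
        vol_ball_complex w₀ hd.le, vol_ball_complex w₀ (hd.le.trans hle)]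
    · push_neg at hle
      rw [diff_eq_empty.mpr (ball_subset_ball hle.le), measure_empty]
      symm
      rw [tsub_eq_zero_iff_le]
      exact ENNReal.ofReal_le_ofReal (mul_le_mul_of_nonneg_left
        (pow_le_pow_left₀ (hRpos t ht).le hle.le 2) Real.pi_pos.le)
  -- bound the outer integral by an indicator integral
  have step : ∫⁻ t in Ioi (0:ℝ), volume {w : ℂ | t < (if d ≤ dist w w₀ then
        Real.sqrt d * dist w w₀ ^ (-(5:ℝ)/2) else 0)}
      ≤ ∫⁻ t in Ioi (0:ℝ), (Ioc (0:ℝ) T).indicator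
        (fun t => ENNReal.ofReal (Real.pi * (d ^ ((2:ℝ)/5) * t ^ (-(4:ℝ)/5)) - Real.pi * d ^ 2)) t := by
    apply lintegral_mono_ae
    filter_upwards [ae_restrict_mem measurableSet_Ioi] with t ht
    rw [hset t ht, hmeas t ht]
    rw [mem_Ioi] at ht
    by_cases htT : t ≤ T
    · rw [indicator_of_mem (show t ∈ Ioc 0 T from ⟨ht, htT⟩), ENNReal.ofReal_sub _ (by positivity), hRsq t ht]
    · rw [indicator_of_notMem (fun hmem => htT hmem.2)]
      exact (tsub_eq_zero_of_le (ENNReal.ofReal_le_ofReal (mul_le_mul_of_nonneg_left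
        (pow_le_pow_left₀ (hRpos t ht).le (hRle t (not_le.mp htT).le) 2) Real.pi_pos.le))).le
  refine le_trans step ?_
  rw [lintegral_indicator measurableSet_Ioc, Measure.restrict_restrict measurableSet_Ioc,
    inter_eq_left.mpr Ioc_subset_Ioi_self]
  -- convert to a Bochner integral
  have hint_rpow : IntegrableOn (fun t : ℝ => t ^ (-(4:ℝ)/5)) (Ioc 0 T) volume := by
    have := intervalIntegral.intervalIntegrable_rpow' (a := 0) (b := T)
      (r := -(4:ℝ)/5) (by norm_num)
    rw [intervalIntegrable_iff, uIoc_of_le hTpos.le] at this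
    exact this
  have hInt : IntegrableOn (fun t : ℝ => Real.pi * (d ^ ((2:ℝ)/5) * t ^ (-(4:ℝ)/5)) - Real.pi * d ^ 2)
      (Ioc 0 T) volume := by
    apply Integrable.sub
    · simpa [mul_assoc] using (hint_rpow.const_mul (Real.pi * d ^ ((2:ℝ)/5)))
    · exact integrableOn_const measure_Ioc_lt_top.ne
  have hnn : 0 ≤ᵐ[volume.restrict (Ioc (0:ℝ) T)]
      (fun t : ℝ => Real.pi * (d ^ ((2:ℝ)/5) * t ^ (-(4:ℝ)/5)) - Real.pi * d ^ 2) := by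
    filter_upwards [ae_restrict_mem measurableSet_Ioc] with t ht
    have h1 : T ^ (-(4:ℝ)/5) ≤ t ^ (-(4:ℝ)/5) :=
      Real.rpow_le_rpow_of_nonpos ht.1 ht.2 (by norm_num)
    have h2 : d ^ ((2:ℝ)/5) * T ^ (-(4:ℝ)/5) = d ^ 2 := by
      rw [hT, ← Real.rpow_mul hd.le, ← Real.rpow_add hd, ← Real.rpow_natCast d 2]
      norm_num
    have h3 : d ^ 2 ≤ d ^ ((2:ℝ)/5) * t ^ (-(4:ℝ)/5) := by
      rw [← h2]
      exact mul_le_mul_of_nonneg_left h1 (Real.rpow_nonneg hd.le _)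
    simp only [Pi.zero_apply]
    nlinarith [h3, Real.pi_pos]
  rw [← ofReal_integral_eq_lintegral_ofReal hInt hnn]
  apply ENNReal.ofReal_le_ofReal
  -- compute the integral
  rw [← intervalIntegral.integral_of_le hTpos.le]
  have e0 : ∫ t in (0:ℝ)..T, t ^ (-(4:ℝ)/5) = T ^ ((1:ℝ)/5) / (1/5) := by
    rw [integral_rpow (Or.inl (by norm_num))]
    norm_num [Real.zero_rpow]
  rw [intervalIntegral.integral_sub
      (by simpa [mul_assoc] using ((intervalIntegral.intervalIntegrable_rpow'
        (a := 0) (b := T) (r := -(4:ℝ)/5) (by norm_num)).const_mul (Real.pi * d ^ ((2:ℝ)/5))))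
      intervalIntegrable_const,
    intervalIntegral.integral_const]
  have e1 : ∫ t in (0:ℝ)..T, Real.pi * (d ^ ((2:ℝ)/5) * t ^ (-(4:ℝ)/5))
      = Real.pi * d ^ ((2:ℝ)/5) * (T ^ ((1:ℝ)/5) / (1/5)) := by
    rw [← e0, ← intervalIntegral.integral_const_mul]
    congr 1
    ext t
    ring
  rw [e1]
  have e2 : d ^ ((2:ℝ)/5) * T ^ ((1:ℝ)/5) = 1 := by
    rw [hT, ← Real.rpow_mul hd.le, ← Real.rpow_add hd]
    norm_num
  have e3 : d ^ 2 * T = 1 := by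
    rw [hT, ← Real.rpow_natCast d 2, ← Real.rpow_add hd]
    norm_num
  have hsmul : (T - 0) • (Real.pi * d ^ 2) = Real.pi * d ^ 2 * T := by
    rw [smul_eq_mul]; ring
  rw [hsmul]
  nlinarith [e2, e3, Real.pi_pos]

lemma row_bound (Γ : Set ℂ) (S : Set ℂ) (hS : MeasurableSet S) (w₀ : ℂ)
    (h1 : ∀ w ∈ S, infDist w₀ Γ ≤ dist w w₀)
    (h2 : ∀ w ∈ S, infDist w Γ ≤ dist w w₀) :
    ∫⁻ w in S, ENNReal.ofReal
      (Real.sqrt (infDist w Γ) * Real.sqrt (infDist w₀ Γ) / dist w w₀ ^ 3)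
      ≤ ENNReal.ofReal (4 * Real.pi) := by
  set d := infDist w₀ Γ with hd
  rcases eq_or_lt_of_le (infDist_nonneg (x := w₀) (s := Γ)) with h0 | h0
  · have hz : ∀ w : ℂ, Real.sqrt (infDist w Γ) * Real.sqrt d / dist w w₀ ^ 3 = 0 := by
      intro w; rw [hd, ← h0, Real.sqrt_zero, mul_zero, zero_div]
    simp [hz]
  · rw [← lintegral_indicator hS]
    refine le_trans (lintegral_mono (fun w => ?_)) (radial_bound w₀ h0)
    by_cases hw : w ∈ S
    · rw [indicator_of_mem hw]
      have hdd : d ≤ dist w w₀ := h1 w hw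
      rw [if_pos hdd]
      apply ENNReal.ofReal_le_ofReal
      have hdist : 0 < dist w w₀ := lt_of_lt_of_le h0 hdd
      have e1 : Real.sqrt (infDist w Γ) ≤ dist w w₀ ^ ((1:ℝ)/2) := by
        rw [← Real.sqrt_eq_rpow]
        exact Real.sqrt_le_sqrt (h2 w hw)
      have e2 : (dist w w₀ ^ 3 : ℝ) = dist w w₀ ^ ((3:ℝ)) := by
        rw [← Real.rpow_natCast (dist w w₀) 3]; norm_num
      calc Real.sqrt (infDist w Γ) * Real.sqrt d / dist w w₀ ^ 3
          ≤ dist w w₀ ^ ((1:ℝ)/2) * Real.sqrt d / dist w w₀ ^ 3 := by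
            apply div_le_div_of_nonneg_right ?_ (by positivity)
            exact mul_le_mul_of_nonneg_right e1 (Real.sqrt_nonneg d)
        _ = Real.sqrt d * dist w w₀ ^ (-(5:ℝ)/2) := by
            rw [e2, div_eq_mul_inv, ← Real.rpow_neg hdist.le, mul_comm (dist w w₀ ^ ((1:ℝ)/2)),
              mul_assoc, ← Real.rpow_add hdist]
            norm_num
    · rw [indicator_of_notMem hw]
      exact zero_le

lemma crossing {a : ℝ → ℝ} (hcont : Continuous a) {w₁ w₂ : ℂ}
    (h1 : a w₁.re < w₁.im) (h2 : w₂.im < a w₂.re) :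
    infDist w₁ {w : ℂ | w.im = a w.re} ≤ dist w₁ w₂ ∧
    infDist w₂ {w : ℂ | w.im = a w.re} ≤ dist w₁ w₂ := by
  set ψ : ℝ → ℂ := fun t => w₂ + t • (w₁ - w₂) with hψ
  have hψc : Continuous ψ := by fun_prop
  set h : ℝ → ℝ := fun t => (ψ t).im - a ((ψ t).re) with hh
  have hhc : Continuous h := by
    apply Continuous.sub (Complex.continuous_im.comp hψc)
    exact hcont.comp (Complex.continuous_re.comp hψc)
  have hψ0 : ψ 0 = w₂ := by simp [hψ]
  have hψ1 : ψ 1 = w₁ := by simp [hψ]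
  have h0 : h 0 ≤ 0 := by simp [hh, hψ0]; linarith
  have h1' : 0 ≤ h 1 := by simp [hh, hψ1]; linarith
  obtain ⟨t, ht, hht⟩ := intermediate_value_Icc zero_le_one hhc.continuousOn ⟨h0, h1'⟩
  have hp : ψ t ∈ {w : ℂ | w.im = a w.re} := by
    simp only [mem_setOf_eq]
    have : (ψ t).im - a ((ψ t).re) = 0 := hht
    linarith
  constructor
  · calc infDist w₁ {w : ℂ | w.im = a w.re} ≤ dist w₁ (ψ t) := infDist_le_dist_of_mem hp
      _ ≤ dist w₁ w₂ := by
          rw [dist_eq_norm, dist_eq_norm, hψ]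
          have : w₁ - (w₂ + t • (w₁ - w₂)) = (1 - t) • (w₁ - w₂) := by
            push_cast; ring_nf; rw [Complex.real_smul, Complex.real_smul]; push_cast; ring
          rw [this, norm_smul]
          have : ‖(1 - t : ℝ)‖ ≤ 1 := by
            rw [Real.norm_eq_abs, abs_le]; constructor <;> [linarith [ht.2]; linarith [ht.1]]
          calc ‖(1 - t : ℝ)‖ * ‖w₁ - w₂‖ ≤ 1 * ‖w₁ - w₂‖ :=
                mul_le_mul_of_nonneg_right this (norm_nonneg _)
            _ = ‖w₁ - w₂‖ := one_mul _
  · calc infDist w₂ {w : ℂ | w.im = a w.re} ≤ dist w₂ (ψ t) := infDist_le_dist_of_mem hp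
      _ ≤ dist w₁ w₂ := by
          rw [dist_eq_norm, dist_eq_norm, hψ]
          have : w₂ - (w₂ + t • (w₁ - w₂)) = (-t) • (w₁ - w₂) := by
            rw [Complex.real_smul, Complex.real_smul]; push_cast; ring
          rw [this, norm_smul]
          have : ‖(-t : ℝ)‖ ≤ 1 := by
            rw [Real.norm_eq_abs, abs_le]; constructor <;> [linarith [ht.2]; linarith [ht.1]]
          calc ‖(-t : ℝ)‖ * ‖w₁ - w₂‖ ≤ 1 * ‖w₁ - w₂‖ :=
                mul_le_mul_of_nonneg_right this (norm_nonneg _)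
            _ = ‖w₁ - w₂‖ := one_mul _

/-- The integral operator `S` from `L²(Ω₊, dλ)` to `L²(Ω₋, dλ)` with kernel
`K(w₁,w₂) = d(w₁)^{1/2} d(w₂)^{1/2} |w₁-w₂|^{-3}`, given by
`SF(w₂) = ∬_{Ω₊} K(w₁,w₂) F(w₁) dλ(w₁)`, is bounded with operator norm at most `4π`. -/
theorem schur_operator_bound
    (a : ℝ → ℝ) (M : ℝ) (hM : 0 ≤ M) (ha : LipschitzWith (Real.toNNReal M) a)
    (Γ : Set ℂ) (hΓ : Γ = {w : ℂ | w.im = a w.re})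
    (Ωp : Set ℂ) (hΩp : Ωp = {w : ℂ | a w.re < w.im})
    (Ωm : Set ℂ) (hΩm : Ωm = {w : ℂ | w.im < a w.re})
    (K : ℂ → ℂ → ℝ)
    (hK : ∀ w₁ w₂, K w₁ w₂ =
      Real.sqrt (infDist w₁ Γ) * Real.sqrt (infDist w₂ Γ) / ‖w₁ - w₂‖ ^ 3) :
    ∀ F : ℂ → ℂ, MemLp F 2 (volume.restrict Ωp) →
      eLpNorm (fun w₂ => ∫ w₁ in Ωp, (K w₁ w₂ : ℂ) * F w₁) 2 (volume.restrict Ωm) ≤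
        ENNReal.ofReal (4 * Real.pi) * eLpNorm F 2 (volume.restrict Ωp) := by
  intro F hF
  have hac : Continuous a := ha.continuous
  have hΩpm : MeasurableSet Ωp := by
    rw [hΩp]
    exact measurableSet_lt (hac.comp Complex.continuous_re).measurable Complex.measurable_im
  have hΩmm : MeasurableSet Ωm := by
    rw [hΩm]
    exact measurableSet_lt Complex.measurable_im (hac.comp Complex.continuous_re).measurable
  set k : ℂ → ℂ → ℝ≥0∞ := fun w₁ w₂ => ENNReal.ofReal (K w₁ w₂) with hk
  have hK0 : ∀ w₁ w₂, 0 ≤ K w₁ w₂ := by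
    intro w₁ w₂; rw [hK]; positivity
  have hkm : Measurable (fun p : ℂ × ℂ => k p.1 p.2) := by
    apply ENNReal.measurable_ofReal.comp
    have he : (fun p : ℂ × ℂ => K p.1 p.2) = fun p : ℂ × ℂ =>
        Real.sqrt (infDist p.1 Γ) * Real.sqrt (infDist p.2 Γ) / ‖p.1 - p.2‖ ^ 3 := by
      funext p; exact hK p.1 p.2
    rw [he]
    apply Measurable.div
    · exact ((Real.continuous_sqrt.comp ((continuous_infDist_pt Γ).comp continuous_fst)).mul
        (Real.continuous_sqrt.comp ((continuous_infDist_pt Γ).comp continuous_snd))).measurable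
    · exact ((continuous_norm.comp (continuous_fst.sub continuous_snd)).pow 3).measurable
  have hksec : ∀ w₂, Measurable (fun w₁ => k w₁ w₂) :=
    fun w₂ => hkm.comp (measurable_id.prodMk measurable_const)
  have hksec2 : ∀ w₁, Measurable (fun w₂ => k w₁ w₂) :=
    fun w₁ => hkm.comp (measurable_const.prodMk measurable_id)
  set G : ℂ → ℝ≥0∞ := fun w => (‖F w‖₊ : ℝ≥0∞) ^ (2:ℝ) with hG
  have hGm : AEMeasurable G (volume.restrict Ωp) :=
    hF.aestronglyMeasurable.enorm.pow_const _
  have hGfin : ∀ w, G w ≠ ⊤ :=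
    fun w => ENNReal.rpow_ne_top_of_nonneg (by norm_num) ENNReal.coe_ne_top
  -- Schur row bounds
  have key1 : ∀ w₂ ∈ Ωm, ∫⁻ w₁ in Ωp, k w₁ w₂ ≤ ENNReal.ofReal (4 * Real.pi) := by
    intro w₂ hw₂
    have he : ∀ w₁ : ℂ, k w₁ w₂ = ENNReal.ofReal
        (Real.sqrt (infDist w₁ Γ) * Real.sqrt (infDist w₂ Γ) / dist w₁ w₂ ^ 3) := by
      intro w₁; rw [hk]; simp only [hK, Complex.dist_eq]
    rw [lintegral_congr he]
    apply row_bound Γ Ωp hΩpm w₂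
    · intro w hw
      exact (crossing hac (hΩp ▸ hw) (hΩm ▸ hw₂)).2.trans_eq (by rw [dist_comm]) |>.trans_eq' (by rw [hΓ]) |>.trans_eq rfl
    · intro w hw
      have := (crossing hac (hΩp ▸ hw) (hΩm ▸ hw₂)).1
      rw [← hΓ] at this
      exact this
  have key2 : ∀ w₁ ∈ Ωp, ∫⁻ w₂ in Ωm, k w₁ w₂ ≤ ENNReal.ofReal (4 * Real.pi) := by
    intro w₁ hw₁
    have he : ∀ w₂ : ℂ, k w₁ w₂ = ENNReal.ofReal
        (Real.sqrt (infDist w₂ Γ) * Real.sqrt (infDist w₁ Γ) / dist w₂ w₁ ^ 3) := by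
      intro w₂; rw [hk]
      simp only [hK, Complex.dist_eq, mul_comm (Real.sqrt (infDist w₁ Γ)),
        norm_sub_rev w₁ w₂]
    rw [lintegral_congr he]
    apply row_bound Γ Ωm hΩmm w₁
    · intro w hw
      have := (crossing hac (hΩp ▸ hw₁) (hΩm ▸ hw)).1
      rw [← hΓ, dist_comm] at this
      exact this
    · intro w hw
      have := (crossing hac (hΩp ▸ hw₁) (hΩm ▸ hw)).2
      rw [← hΓ, dist_comm] at this
      exact this
  -- pointwise Cauchy-Schwarz bound
  have pointwise : ∀ w₂ ∈ Ωm,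
      (‖∫ w₁ in Ωp, (K w₁ w₂ : ℂ) * F w₁‖₊ : ℝ≥0∞) ^ (2:ℝ) ≤
        ENNReal.ofReal (4 * Real.pi) * ∫⁻ w₁ in Ωp, k w₁ w₂ * G w₁ := by
    intro w₂ hw₂
    have e0 : ∀ w₁ : ℂ, (‖(K w₁ w₂ : ℂ) * F w₁‖₊ : ℝ≥0∞) = k w₁ w₂ * (‖F w₁‖₊ : ℝ≥0∞) := by
      intro w₁
      rw [nnnorm_mul, ENNReal.coe_mul]
      congr 1
      rw [← enorm_eq_nnnorm, ← ofReal_norm, Complex.norm_real, Real.norm_eq_abs,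
        _root_.abs_of_nonneg (hK0 w₁ w₂), hk]
    have h1 : (‖∫ w₁ in Ωp, (K w₁ w₂ : ℂ) * F w₁‖₊ : ℝ≥0∞) ≤
        ∫⁻ w₁ in Ωp, k w₁ w₂ * (‖F w₁‖₊ : ℝ≥0∞) :=
      le_trans (enorm_integral_le_lintegral_enorm _) (le_of_eq (lintegral_congr e0))
    have hcs : ∫⁻ w₁ in Ωp, k w₁ w₂ * (‖F w₁‖₊ : ℝ≥0∞) ≤
        (∫⁻ w₁ in Ωp, k w₁ w₂) ^ ((1:ℝ)/2) *
          (∫⁻ w₁ in Ωp, k w₁ w₂ * G w₁) ^ ((1:ℝ)/2) := by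
      have conj : Real.HolderConjugate 2 2 := Real.HolderConjugate.two_two
      have hfm : AEMeasurable (fun w₁ => (k w₁ w₂) ^ ((1:ℝ)/2)) (volume.restrict Ωp) :=
        ((hksec w₂).pow_const _).aemeasurable
      have hgm' : AEMeasurable (fun w₁ => (k w₁ w₂) ^ ((1:ℝ)/2) * (‖F w₁‖₊ : ℝ≥0∞))
          (volume.restrict Ωp) := hfm.mul hF.aestronglyMeasurable.enorm
      have hhalf : ∀ x : ℝ≥0∞, x ^ ((1:ℝ)/2) * x ^ ((1:ℝ)/2) = x := by
        intro x
        rw [← ENNReal.rpow_add_of_nonneg ((1:ℝ)/2) ((1:ℝ)/2) (by norm_num) (by norm_num)]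
        norm_num
      have hsq : ∀ x : ℝ≥0∞, (x ^ ((1:ℝ)/2)) ^ (2:ℝ) = x := by
        intro x
        rw [← ENNReal.rpow_mul]
        norm_num
      have := ENNReal.lintegral_mul_le_Lp_mul_Lq (volume.restrict Ωp) conj hfm hgm'
      calc ∫⁻ w₁ in Ωp, k w₁ w₂ * (‖F w₁‖₊ : ℝ≥0∞)
          = ∫⁻ w₁ in Ωp, ((fun w₁ => (k w₁ w₂) ^ ((1:ℝ)/2)) *
              (fun w₁ => (k w₁ w₂) ^ ((1:ℝ)/2) * (‖F w₁‖₊ : ℝ≥0∞))) w₁ := by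
            apply lintegral_congr
            intro w₁
            simp only [Pi.mul_apply]
            rw [← mul_assoc, hhalf]
        _ ≤ (∫⁻ w₁ in Ωp, ((k w₁ w₂) ^ ((1:ℝ)/2)) ^ (2:ℝ)) ^ ((1:ℝ)/2) *
            (∫⁻ w₁ in Ωp, ((k w₁ w₂) ^ ((1:ℝ)/2) * (‖F w₁‖₊ : ℝ≥0∞)) ^ (2:ℝ)) ^ ((1:ℝ)/2) := this
        _ = (∫⁻ w₁ in Ωp, k w₁ w₂) ^ ((1:ℝ)/2) *
            (∫⁻ w₁ in Ωp, k w₁ w₂ * G w₁) ^ ((1:ℝ)/2) := by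
            congr 1
            · congr 1
              exact lintegral_congr fun w₁ => hsq _
            · congr 1
              apply lintegral_congr
              intro w₁
              rw [ENNReal.mul_rpow_of_nonneg _ _ (by norm_num : (0:ℝ) ≤ 2), hsq, hG]
    calc (‖∫ w₁ in Ωp, (K w₁ w₂ : ℂ) * F w₁‖₊ : ℝ≥0∞) ^ (2:ℝ)
        ≤ ((∫⁻ w₁ in Ωp, k w₁ w₂) ^ ((1:ℝ)/2) *
            (∫⁻ w₁ in Ωp, k w₁ w₂ * G w₁) ^ ((1:ℝ)/2)) ^ (2:ℝ) :=
          ENNReal.rpow_le_rpow (h1.trans hcs) (by norm_num)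
      _ = (∫⁻ w₁ in Ωp, k w₁ w₂) * (∫⁻ w₁ in Ωp, k w₁ w₂ * G w₁) := by
          rw [ENNReal.mul_rpow_of_nonneg _ _ (by norm_num : (0:ℝ) ≤ 2),
            ← ENNReal.rpow_mul, ← ENNReal.rpow_mul]
          norm_num
      _ ≤ ENNReal.ofReal (4 * Real.pi) * ∫⁻ w₁ in Ωp, k w₁ w₂ * G w₁ :=
          mul_le_mul_left (key1 w₂ hw₂) _
  -- main chain
  have hTm : ∫⁻ w₂ in Ωm, (‖∫ w₁ in Ωp, (K w₁ w₂ : ℂ) * F w₁‖₊ : ℝ≥0∞) ^ (2:ℝ) ≤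
      ENNReal.ofReal (4 * Real.pi) * (ENNReal.ofReal (4 * Real.pi) * ∫⁻ w₁ in Ωp, G w₁) := by
    calc ∫⁻ w₂ in Ωm, (‖∫ w₁ in Ωp, (K w₁ w₂ : ℂ) * F w₁‖₊ : ℝ≥0∞) ^ (2:ℝ)
        ≤ ∫⁻ w₂ in Ωm, ENNReal.ofReal (4 * Real.pi) * ∫⁻ w₁ in Ωp, k w₁ w₂ * G w₁ := by
          apply lintegral_mono_ae
          filter_upwards [ae_restrict_mem hΩmm] with w₂ hw₂
          exact pointwise w₂ hw₂
      _ = ENNReal.ofReal (4 * Real.pi) * ∫⁻ w₂ in Ωm, ∫⁻ w₁ in Ωp, k w₁ w₂ * G w₁ :=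
          lintegral_const_mul' _ _ ENNReal.ofReal_ne_top
      _ = ENNReal.ofReal (4 * Real.pi) * ∫⁻ w₁ in Ωp, ∫⁻ w₂ in Ωm, k w₁ w₂ * G w₁ := by
          congr 1
          exact lintegral_lintegral_swap
            (((hkm.comp measurable_swap).aemeasurable).mul hGm.comp_snd)
      _ = ENNReal.ofReal (4 * Real.pi) * ∫⁻ w₁ in Ωp, (∫⁻ w₂ in Ωm, k w₁ w₂) * G w₁ := by
          congr 1
          exact lintegral_congr fun w₁ => lintegral_mul_const' _ _ (hGfin w₁)
      _ ≤ ENNReal.ofReal (4 * Real.pi) * ∫⁻ w₁ in Ωp, ENNReal.ofReal (4 * Real.pi) * G w₁ := by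
          apply mul_le_mul_right
          apply lintegral_mono_ae
          filter_upwards [ae_restrict_mem hΩpm] with w₁ hw₁
          exact mul_le_mul_left (key2 w₁ hw₁) _
      _ = ENNReal.ofReal (4 * Real.pi) * (ENNReal.ofReal (4 * Real.pi) * ∫⁻ w₁ in Ωp, G w₁) := by
          rw [lintegral_const_mul' _ _ ENNReal.ofReal_ne_top]
  rw [eLpNorm_eq_lintegral_rpow_enorm_toReal (by norm_num) (by norm_num),
    eLpNorm_eq_lintegral_rpow_enorm_toReal (by norm_num) (by norm_num)]
  simp only [ENNReal.toReal_ofNat]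
  have haa : ∀ x : ℝ≥0∞, x * x = x ^ (2:ℝ) := by
    intro x
    rw [show (2:ℝ) = 1 + 1 by norm_num, ENNReal.rpow_add_of_nonneg 1 1 zero_le_one zero_le_one,
      ENNReal.rpow_one]
  calc (∫⁻ w₂ in Ωm, (‖∫ w₁ in Ωp, (K w₁ w₂ : ℂ) * F w₁‖₊ : ℝ≥0∞) ^ (2:ℝ)) ^ ((1:ℝ)/2)
      ≤ (ENNReal.ofReal (4 * Real.pi) * (ENNReal.ofReal (4 * Real.pi) *
          ∫⁻ w₁ in Ωp, G w₁)) ^ ((1:ℝ)/2) := ENNReal.rpow_le_rpow hTm (by norm_num)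
    _ = ENNReal.ofReal (4 * Real.pi) * (∫⁻ w₁ in Ωp, G w₁) ^ ((1:ℝ)/2) := by
        rw [← mul_assoc, haa, ENNReal.mul_rpow_of_nonneg _ _ (by norm_num : (0:ℝ) ≤ 1/2),
          ← ENNReal.rpow_mul]
        norm_num
end
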